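/- The blow-up map F_ε: ℝᵈ → ℝᵈ defined by F_ε(x) = x in ℝᵈ\B₂, F_ε(x) = ((2−2ε)/(2−ε) + |x|/(2−ε)) x/|x| in B₂\B_ε, F_ε(x) = x/ε in B_ε (with 0 < ε < 1/2) is a bijection of ℝᵈ, Lipschitz with Lipschitz inverse, maps B_ε onto B₁ and B₂\B_ε onto B₂\B₁, equals the identity outside B₂, and satisfies det∇F_ε ≥ c(ε) > 0 a.e. -/

import Mathlib

open MeasureTheory Metric

noncomputable section

/-- The Kohn–Shen–Vogelius–Weinstein blow-up map `F_ε`: identity outside `B₂`,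
`x ↦ ((2−2ε)/(2−ε) + |x|/(2−ε)) x/|x|` on `B₂ \ B_ε`, `x ↦ x/ε` on `B_ε`. -/
def Fmap (d : ℕ) (ε : ℝ) (x : EuclideanSpace ℝ (Fin d)) : EuclideanSpace ℝ (Fin d) :=
  if 2 ≤ ‖x‖ then x
  else if ε ≤ ‖x‖ then (((2 - 2 * ε) / (2 - ε)) / ‖x‖ + 1 / (2 - ε)) • x
  else ε⁻¹ • x

/-- Jacobian matrix `∇F` of a map `F : ℝᵈ → ℝᵈ`. -/
def jacMat {d : ℕ} (F : EuclideanSpace ℝ (Fin d) → EuclideanSpace ℝ (Fin d))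
    (x : EuclideanSpace ℝ (Fin d)) : Matrix (Fin d) (Fin d) ℝ :=
  fun i j => fderiv ℝ F x (EuclideanSpace.single j 1) i

namespace KSVW

/-! ### Scalar radial profiles -/

def phi (ε r : ℝ) : ℝ := max r (min (r / ε) ((2 - 2*ε + r) / (2 - ε)))
def psi (ε s : ℝ) : ℝ := min s (max (ε * s) ((2 - ε) * s - (2 - 2*ε)))

variable {ε r s : ℝ}

lemma phi_inner (hε : 0 < ε) (hε' : ε < 1/2) (h0 : 0 ≤ r) (h1 : r ≤ ε) :
    phi ε r = r / ε := by
  have hε2 : (0:ℝ) < 2 - ε := by linarith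
  have hmin : r / ε ≤ (2 - 2*ε + r) / (2 - ε) := by
    rw [div_le_div_iff₀ hε hε2]; nlinarith
  have hmax : r ≤ r / ε := by
    rw [le_div_iff₀ hε]; nlinarith
  rw [phi, min_eq_left hmin, max_eq_right hmax]

lemma phi_zero (hε : 0 < ε) (hε' : ε < 1/2) : phi ε 0 = 0 := by
  rw [phi_inner hε hε' le_rfl hε.le, zero_div]

lemma phi_mid (hε : 0 < ε) (hε' : ε < 1/2) (h0 : ε ≤ r) (h1 : r ≤ 2) :
    phi ε r = (2 - 2*ε + r) / (2 - ε) := by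
  have hε2 : (0:ℝ) < 2 - ε := by linarith
  have hmin : (2 - 2*ε + r) / (2 - ε) ≤ r / ε := by
    rw [div_le_div_iff₀ hε2 hε]; nlinarith
  have hmax : r ≤ (2 - 2*ε + r) / (2 - ε) := by
    rw [le_div_iff₀ hε2]; nlinarith
  rw [phi, min_eq_right hmin, max_eq_right hmax]

lemma phi_outer (hε : 0 < ε) (hε' : ε < 1/2) (h1 : 2 ≤ r) : phi ε r = r := by
  have hε2 : (0:ℝ) < 2 - ε := by linarith
  have h : (2 - 2*ε + r)/(2-ε) ≤ r/ε := by
    rw [div_le_div_iff₀ hε2 hε]; nlinarith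
  rw [phi, min_eq_right h, max_eq_left]
  rw [div_le_iff₀ hε2]; nlinarith

lemma psi_inner (hε : 0 < ε) (hε' : ε < 1/2) (h0 : 0 ≤ s) (h1 : s ≤ 1) :
    psi ε s = ε * s := by
  have hmax : (2 - ε) * s - (2 - 2*ε) ≤ ε * s := by nlinarith
  have hmin : ε * s ≤ s := by nlinarith
  rw [psi, max_eq_left hmax, min_eq_right hmin]

lemma psi_zero (hε : 0 < ε) (hε' : ε < 1/2) : psi ε 0 = 0 := by
  rw [psi_inner hε hε' le_rfl zero_le_one, mul_zero]

lemma psi_mid (hε : 0 < ε) (hε' : ε < 1/2) (h0 : 1 ≤ s) (h1 : s ≤ 2) :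
    psi ε s = (2 - ε) * s - (2 - 2*ε) := by
  have hmax : ε * s ≤ (2 - ε) * s - (2 - 2*ε) := by nlinarith
  have hmin : (2 - ε) * s - (2 - 2*ε) ≤ s := by nlinarith
  rw [psi, max_eq_right hmax, min_eq_right hmin]

lemma psi_outer (hε : 0 < ε) (hε' : ε < 1/2) (h1 : 2 ≤ s) : psi ε s = s := by
  have hmax : ε * s ≤ (2 - ε) * s - (2 - 2*ε) := by nlinarith
  have hmin : s ≤ (2 - ε) * s - (2 - 2*ε) := by nlinarith
  rw [psi, max_eq_right hmax, min_eq_left hmin]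

lemma psi_phi (hε : 0 < ε) (hε' : ε < 1/2) (h0 : 0 ≤ r) : psi ε (phi ε r) = r := by
  have hε2 : (0:ℝ) < 2 - ε := by linarith
  rcases le_total r ε with h | h
  · rw [phi_inner hε hε' h0 h]
    rw [psi_inner hε hε' (by positivity) (by rw [div_le_one hε]; linarith)]
    field_simp
  · rcases le_total r 2 with h2 | h2
    · rw [phi_mid hε hε' h h2]
      rw [psi_mid hε hε' (by rw [le_div_iff₀ hε2]; nlinarith) (by rw [div_le_iff₀ hε2]; nlinarith)]
      field_simp
      ring
    · rw [phi_outer hε hε' h2, psi_outer hε hε' h2]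

lemma phi_psi (hε : 0 < ε) (hε' : ε < 1/2) (h0 : 0 ≤ s) : phi ε (psi ε s) = s := by
  have hε2 : (0:ℝ) < 2 - ε := by linarith
  rcases le_total s 1 with h | h
  · rw [psi_inner hε hε' h0 h]
    rw [phi_inner hε hε' (by positivity) (by nlinarith)]
    field_simp
  · rcases le_total s 2 with h2 | h2
    · rw [psi_mid hε hε' h h2]
      rw [phi_mid hε hε' (by nlinarith) (by nlinarith)]
      field_simp
      ring
    · rw [psi_outer hε hε' h2, phi_outer hε hε' (by nlinarith)]

lemma phi_nonneg (h0 : 0 ≤ r) : 0 ≤ phi ε r := le_trans h0 (le_max_left _ _)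

lemma phi_pos (h0 : 0 < r) : 0 < phi ε r := lt_of_lt_of_le h0 (le_max_left _ _)

lemma psi_nonneg (hε : 0 < ε) (h0 : 0 ≤ s) : 0 ≤ psi ε s :=
  le_min h0 (le_trans (by positivity) (le_max_left _ _))

lemma psi_pos (hε : 0 < ε) (h0 : 0 < s) : 0 < psi ε s :=
  lt_min h0 (lt_of_lt_of_le (by positivity) (le_max_left _ _))

/-! ### Radial maps -/

variable {E : Type*} [NormedAddCommGroup E] [NormedSpace ℝ E]

def radial (g : ℝ → ℝ) (x : E) : E := (g ‖x‖ / ‖x‖) • x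

lemma radial_zero (g : ℝ → ℝ) : radial g (0 : E) = 0 := by simp [radial]

lemma norm_radial (g : ℝ → ℝ) (h0 : g 0 = 0) (hpos : ∀ r, 0 ≤ r → 0 ≤ g r) (x : E) :
    ‖radial g x‖ = g ‖x‖ := by
  rcases eq_or_ne x 0 with rfl | hx
  · simp [radial, h0]
  · have hr : 0 < ‖x‖ := norm_pos_iff.mpr hx
    rw [radial, norm_smul, Real.norm_eq_abs, abs_div, abs_of_nonneg (hpos _ (norm_nonneg x)),
      abs_of_pos hr, div_mul_cancel₀ _ hr.ne']

lemma radial_radial (g h : ℝ → ℝ) (hg0 : g 0 = 0) (hgpos : ∀ r, 0 ≤ r → 0 ≤ g r)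
    (hgpos' : ∀ r, 0 < r → 0 < g r) (hinv : ∀ r, 0 ≤ r → h (g r) = r) (x : E) :
    radial h (radial g x) = x := by
  rcases eq_or_ne x 0 with rfl | hx
  · simp [radial]
  · have hr : 0 < ‖x‖ := norm_pos_iff.mpr hx
    have hgr : 0 < g ‖x‖ := hgpos' _ hr
    rw [radial, norm_radial g hg0 hgpos, radial, hinv _ (norm_nonneg x), smul_smul]
    rw [div_mul_div_comm, mul_comm, div_self (by positivity), one_smul]

lemma radial_dist_le (g : ℝ → ℝ) (L : ℝ) (hL : 0 ≤ L)
    (hg : ∀ r s : ℝ, |g r - g s| ≤ L * |r - s|) (h0 : g 0 = 0)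
    (hpos : ∀ r, 0 ≤ r → 0 ≤ g r) (x y : E) (hxy : ‖y‖ ≤ ‖x‖) :
    ‖radial g x - radial g y‖ ≤ 3 * L * ‖x - y‖ := by
  set r := ‖x‖ with hrdef
  set s := ‖y‖ with hsdef
  have hs0 : 0 ≤ s := norm_nonneg y
  have hgr_le : g r ≤ L * r := by
    have := hg r 0
    rw [h0, sub_zero, sub_zero] at this
    calc g r ≤ |g r| := le_abs_self _
    _ ≤ L * |r| := this
    _ = L * r := by rw [abs_of_nonneg (norm_nonneg x)]
  have hgs_le : g s ≤ L * s := by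
    have := hg s 0
    rw [h0, sub_zero, sub_zero] at this
    calc g s ≤ |g s| := le_abs_self _
    _ ≤ L * |s| := this
    _ = L * s := by rw [abs_of_nonneg hs0]
  have hd : r - s ≤ ‖x - y‖ := by
    calc r - s ≤ |r - s| := le_abs_self _
    _ ≤ ‖x - y‖ := abs_norm_sub_norm_le x y
  rcases eq_or_lt_of_le (norm_nonneg x) with hr0 | hr0
  · -- x = 0, hence y = 0
    have hx : x = 0 := norm_eq_zero.mp hr0.symm
    have hy : y = 0 := norm_eq_zero.mp (le_antisymm (hr0 ▸ hxy) hs0)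
    simp [hx, hy, radial_zero]
  rcases eq_or_lt_of_le hs0 with hs0' | hs0'
  · -- y = 0
    have hy : y = 0 := norm_eq_zero.mp hs0'.symm
    rw [hy, radial_zero, sub_zero, norm_radial g h0 hpos, sub_zero]
    calc g ‖x‖ ≤ L * ‖x‖ := hgr_le
    _ ≤ 3 * L * ‖x‖ := by nlinarith [norm_nonneg x]
  · -- main case : 0 < s ≤ r
    have key : radial g x - radial g y
        = (g r / r) • (x - y) + (g r / r - g s / s) • y := by
      rw [radial, radial, smul_sub, sub_smul]
      abel
    have habs : |g r / r - g s / s| * s ≤ 2 * L * (r - s) := by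
      have heq : g r / r - g s / s = (s * g r - r * g s) / (r * s) := by
        rw [div_sub_div _ _ (hr0.ne' : r ≠ 0) hs0'.ne']; ring
      have hnum : |s * g r - r * g s| ≤ 2 * L * s * (r - s) := by
        have e1 : s * g r - r * g s = s * (g r - g s) - (r - s) * g s := by ring
        rw [e1]
        calc |s * (g r - g s) - (r - s) * g s|
            ≤ |s * (g r - g s)| + |(r - s) * g s| := abs_sub _ _
        _ = s * |g r - g s| + (r - s) * g s := by
            rw [abs_mul, abs_mul, abs_of_nonneg hs0'.le,
              abs_of_nonneg (by linarith : (0:ℝ) ≤ r - s),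
              abs_of_nonneg (hpos _ hs0)]
        _ ≤ s * (L * |r - s|) + (r - s) * (L * s) := by
            have := hg r s
            have h2 := hpos s hs0
            nlinarith
        _ = 2 * L * s * (r - s) := by
            rw [abs_of_nonneg (by linarith : (0:ℝ) ≤ r - s)]; ring
      have hD : |g r / r - g s / s| * (r * s) ≤ 2 * L * s * (r - s) := by
        rw [heq, abs_div, abs_of_pos (by positivity : (0:ℝ) < r * s),
          div_mul_cancel₀ _ (by positivity : (r*s) ≠ 0)]
        exact hnum
      have hsr : (0:ℝ) ≤ r - s := sub_nonneg.mpr hxy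
      have hprod : (0:ℝ) ≤ 2 * L * (r - s) * (r - s) := by positivity
      have e2 : |g r / r - g s / s| * s * r = |g r / r - g s / s| * (r * s) := by ring
      have : |g r / r - g s / s| * s * r ≤ (2 * L * (r - s)) * r := by
        rw [e2]; nlinarith
      exact le_of_mul_le_mul_right this hr0
    have hcoef : |g r / r| ≤ L := by
      rw [abs_of_nonneg (div_nonneg (hpos _ (norm_nonneg x)) (norm_nonneg x))]
      rw [div_le_iff₀ hr0]
      exact hgr_le
    calc ‖radial g x - radial g y‖
        = ‖(g r / r) • (x - y) + (g r / r - g s / s) • y‖ := by rw [key]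
    _ ≤ ‖(g r / r) • (x - y)‖ + ‖(g r / r - g s / s) • y‖ := norm_add_le _ _
    _ = |g r / r| * ‖x - y‖ + |g r / r - g s / s| * s := by
        rw [norm_smul, norm_smul, Real.norm_eq_abs, Real.norm_eq_abs]
    _ ≤ L * ‖x - y‖ + 2 * L * (r - s) := by
        have h1 := mul_le_mul_of_nonneg_right hcoef (norm_nonneg (x - y))
        linarith
    _ ≤ 3 * L * ‖x - y‖ := by
        have h2 : (0:ℝ) ≤ 2 * L * (‖x - y‖ - (r - s)) :=
          mul_nonneg (by linarith) (by linarith)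
        nlinarith

lemma radial_lipschitz (g : ℝ → ℝ) (L : NNReal) (hg : LipschitzWith L g) (h0 : g 0 = 0)
    (hpos : ∀ r, 0 ≤ r → 0 ≤ g r) : LipschitzWith (3 * L) (radial g : E → E) := by
  have hg' : ∀ r s : ℝ, |g r - g s| ≤ (L:ℝ) * |r - s| := fun r s => by
    have := hg.dist_le_mul r s
    rwa [Real.dist_eq, Real.dist_eq] at this
  apply LipschitzWith.of_dist_le_mul
  intro x y
  rw [dist_eq_norm, dist_eq_norm]
  have h3 : ((3 * L : NNReal) : ℝ) = 3 * (L:ℝ) := by push_cast; ring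
  rw [h3]
  rcases le_total ‖y‖ ‖x‖ with h | h
  · exact radial_dist_le g L L.coe_nonneg hg' h0 hpos x y h
  · calc ‖radial g x - radial g y‖ = ‖radial g y - radial g x‖ := norm_sub_rev _ _
    _ ≤ 3 * (L:ℝ) * ‖y - x‖ := radial_dist_le g L L.coe_nonneg hg' h0 hpos y x h
    _ = 3 * (L:ℝ) * ‖x - y‖ := by rw [norm_sub_rev]

lemma lipschitz_affine (a b : ℝ) : LipschitzWith (Real.nnabs a) (fun r : ℝ => a * r + b) := by
  apply LipschitzWith.of_dist_le_mul
  intro x y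
  rw [Real.dist_eq, Real.dist_eq]
  have he : a * x + b - (a * y + b) = a * (x - y) := by ring
  rw [he, abs_mul, Real.coe_nnabs]

lemma phi_lipschitz (hε : 0 < ε) (hε' : ε < 1/2) :
    ∃ K : NNReal, LipschitzWith K (phi ε) := by
  have he : phi ε = fun r => max (1 * r + 0)
      (min (ε⁻¹ * r + 0) ((2-ε)⁻¹ * r + (2 - 2*ε)/(2-ε))) := by
    funext r
    have hε2 : (0:ℝ) < 2 - ε := by linarith
    have e1 : (1:ℝ) * r + 0 = r := by ring
    have e2 : ε⁻¹ * r + 0 = r / ε := by field_simp; ring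
    have e3 : (2-ε)⁻¹ * r + (2 - 2*ε)/(2-ε) = (2 - 2*ε + r)/(2-ε) := by field_simp; ring
    rw [phi, e1, e2, e3]
  rw [he]
  exact ⟨_, (lipschitz_affine 1 0).max ((lipschitz_affine ε⁻¹ 0).min (lipschitz_affine (2-ε)⁻¹ _))⟩

lemma psi_lipschitz (hε : 0 < ε) (hε' : ε < 1/2) :
    ∃ K : NNReal, LipschitzWith K (psi ε) := by
  have he : psi ε = fun s => min (1 * s + 0) (max (ε * s + 0) ((2-ε) * s + (-(2 - 2*ε)))) := by
    funext s
    have e1 : (1:ℝ) * s + 0 = s := by ring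
    have e2 : ε * s + 0 = ε * s := by ring
    have e3 : (2-ε) * s + (-(2 - 2*ε)) = (2-ε) * s - (2 - 2*ε) := by ring
    rw [psi, e1, e2, e3]
  rw [he]
  exact ⟨_, (lipschitz_affine 1 0).min ((lipschitz_affine ε 0).max (lipschitz_affine (2-ε) _))⟩

/-! ### Derivative helpers -/

variable {F : Type*} [NormedAddCommGroup F] [InnerProductSpace ℝ F]

lemma hasFDerivAt_norm {x : F} (hx : x ≠ 0) :
    HasFDerivAt (fun y : F => ‖y‖) (‖x‖⁻¹ • innerSL ℝ x) x := by
  have hr : (0:ℝ) < ‖x‖ := norm_pos_iff.mpr hx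
  have h1 : HasFDerivAt (fun y : F => ‖y‖ ^ 2) (2 • innerSL ℝ x) x :=
    (hasStrictFDerivAt_norm_sq x).hasFDerivAt
  have h2 : HasDerivAt Real.sqrt (1 / (2 * Real.sqrt (‖x‖ ^ 2))) (‖x‖ ^ 2) :=
    Real.hasDerivAt_sqrt (by positivity)
  have h3 := h2.comp_hasFDerivAt x h1
  have he : (Real.sqrt ∘ fun y : F => ‖y‖ ^ 2) = fun y : F => ‖y‖ := by
    funext y; simp [Function.comp, Real.sqrt_sq (norm_nonneg y)]
  rw [he] at h3
  refine h3.congr_fderiv ?_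
  rw [Real.sqrt_sq (norm_nonneg x)]
  ext v
  simp only [ContinuousLinearMap.smul_apply, smul_eq_mul, nsmul_eq_mul, Nat.cast_ofNat]
  field_simp

lemma hasFDerivAt_middle {x : F} (hx : x ≠ 0) (a b : ℝ) :
    HasFDerivAt (fun y : F => (a * ‖y‖⁻¹ + b) • y)
      ((a * ‖x‖⁻¹ + b) • ContinuousLinearMap.id ℝ F +
        ((a * -(‖x‖ ^ 2)⁻¹) • (‖x‖⁻¹ • innerSL ℝ x)).smulRight x) x := by
  have hr : ‖x‖ ≠ 0 := norm_ne_zero_iff.mpr hx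
  have hn := hasFDerivAt_norm hx
  have hinv : HasFDerivAt (fun y : F => ‖y‖⁻¹) ((-(‖x‖ ^ 2)⁻¹) • (‖x‖⁻¹ • innerSL ℝ x)) x := by
    have := (hasDerivAt_inv hr).comp_hasFDerivAt x hn
    exact this
  have hc : HasFDerivAt (fun y : F => a * ‖y‖⁻¹ + b)
      ((a * -(‖x‖ ^ 2)⁻¹) • (‖x‖⁻¹ • innerSL ℝ x)) x := by
    have h := (hinv.const_mul a).add_const b
    have e : (a * -(‖x‖ ^ 2)⁻¹) • (‖x‖⁻¹ • innerSL ℝ x)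
        = a • ((-(‖x‖ ^ 2)⁻¹) • (‖x‖⁻¹ • innerSL ℝ x)) := (smul_smul a _ _).symm
    rw [e]
    exact h
  exact hc.smul (hasFDerivAt_id x)

/-! ### Determinant helpers -/

lemma det_one_add_smul_vecMulVec {n : Type*} [Fintype n] [DecidableEq n] (c : ℝ) (v : n → ℝ) :
    (1 + c • Matrix.vecMulVec v v).det = 1 + c * ∑ i, v i * v i := by
  have e : c • Matrix.vecMulVec v v = Matrix.vecMulVec (c • v) v := by
    ext i j; simp [Matrix.vecMulVec_apply, mul_assoc]
  rw [e, Matrix.vecMulVec_eq Unit, Matrix.det_one_add_replicateCol_mul_replicateRow]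
  simp [dotProduct, Finset.mul_sum, mul_comm, mul_assoc, mul_left_comm]

lemma det_smul_one_add_smul_vecMulVec {n : Type*} [Fintype n] [DecidableEq n]
    (α β : ℝ) (hα : α ≠ 0) (v : n → ℝ) :
    (α • (1 : Matrix n n ℝ) + β • Matrix.vecMulVec v v).det
      = α ^ Fintype.card n * (1 + β / α * ∑ i, v i * v i) := by
  have e : α • (1 : Matrix n n ℝ) + β • Matrix.vecMulVec v v
      = α • ((1 : Matrix n n ℝ) + (β / α) • Matrix.vecMulVec v v) := by
    rw [smul_add, smul_smul, mul_div_cancel₀ _ hα]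
  rw [e, Matrix.det_smul, det_one_add_smul_vecMulVec]

end KSVW

open KSVW

lemma Fmap_eq_radial {d : ℕ} {ε : ℝ} (hε : 0 < ε) (hε' : ε < 1/2)
    (x : EuclideanSpace ℝ (Fin d)) : Fmap d ε x = radial (phi ε) x := by
  rcases le_or_gt 2 ‖x‖ with h2 | h2
  · rw [Fmap, if_pos h2, radial, phi_outer hε hε' h2,
      div_self ((lt_of_lt_of_le two_pos h2).ne' : ‖x‖ ≠ 0), one_smul]
  · rcases le_or_gt ε ‖x‖ with h1 | h1
    · rw [Fmap, if_neg (not_le.mpr h2), if_pos h1, radial, phi_mid hε hε' h1 h2.le]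
      congr 1
      have hr : ‖x‖ ≠ 0 := ne_of_gt (lt_of_lt_of_le hε h1)
      have hε2 : (2:ℝ) - ε ≠ 0 := by intro h; nlinarith [h]
      field_simp
    · rw [Fmap, if_neg (not_le.mpr h2), if_neg (not_le.mpr h1)]
      rcases eq_or_ne x 0 with rfl | hx
      · simp [radial]
      · rw [radial, phi_inner hε hε' (norm_nonneg x) h1.le]
        have hr : ‖x‖ ≠ 0 := norm_ne_zero_iff.mpr hx
        congr 1
        field_simp

/-- **Properties of the blow-up map `F_ε`.** For `0 < ε < 1/2` and `d ≥ 2`,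
`F_ε` is a bijection of `ℝᵈ`, Lipschitz with Lipschitz inverse, maps `B_ε`
onto `B₁` and `B₂ \ B_ε` onto `B₂ \ B₁`, equals the identity outside `B₂`,
and `det ∇F_ε ≥ c(ε) > 0` a.e. -/
theorem Fmap_properties (d : ℕ) (hd : 2 ≤ d) (ε : ℝ) (hε : 0 < ε) (hε' : ε < 1 / 2) :
    Function.Bijective (Fmap d ε) ∧
    (∃ K : NNReal, LipschitzWith K (Fmap d ε)) ∧
    (∃ K : NNReal, LipschitzWith K (Function.invFun (Fmap d ε))) ∧
    Fmap d ε '' ball 0 ε = ball 0 1 ∧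
    Fmap d ε '' (ball 0 2 \ ball 0 ε) = ball 0 2 \ ball 0 1 ∧
    (∀ x : EuclideanSpace ℝ (Fin d), x ∉ ball 0 2 → Fmap d ε x = x) ∧
    (∃ c : ℝ, 0 < c ∧ ∀ᵐ x : EuclideanSpace ℝ (Fin d) ∂volume,
      c ≤ (jacMat (Fmap d ε) x).det) := by
  have hε2 : (0:ℝ) < 2 - ε := by linarith
  have hFeq : Fmap d ε = radial (phi ε) := funext (Fmap_eq_radial hε hε')
  have hphi0 := phi_zero hε hε'
  have hpsi0 := psi_zero hε hε'
  have hphipos : ∀ r, 0 ≤ r → 0 ≤ phi ε r := fun r h => phi_nonneg h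
  have hpsipos : ∀ s, 0 ≤ s → 0 ≤ psi ε s := fun s h => psi_nonneg hε h
  have hleft : ∀ x : EuclideanSpace ℝ (Fin d), radial (psi ε) (Fmap d ε x) = x := by
    intro x
    rw [hFeq]
    exact radial_radial (phi ε) (psi ε) hphi0 hphipos (fun r h => phi_pos h)
      (fun r h => psi_phi hε hε' h) x
  have hright : ∀ y : EuclideanSpace ℝ (Fin d), Fmap d ε (radial (psi ε) y) = y := by
    intro y
    rw [hFeq]
    exact radial_radial (psi ε) (phi ε) hpsi0 hpsipos (fun s h => psi_pos hε h)
      (fun s h => phi_psi hε hε' h) y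
  have hbij : Function.Bijective (Fmap d ε) :=
    Function.bijective_iff_has_inverse.mpr ⟨radial (psi ε), hleft, hright⟩
  have hnormF : ∀ x : EuclideanSpace ℝ (Fin d), ‖Fmap d ε x‖ = phi ε ‖x‖ := by
    intro x; rw [hFeq]; exact norm_radial _ hphi0 hphipos x
  have hnormG : ∀ y : EuclideanSpace ℝ (Fin d), ‖radial (psi ε) y‖ = psi ε ‖y‖ :=
    norm_radial _ hpsi0 hpsipos
  refine ⟨hbij, ?_, ?_, ?_, ?_, ?_, ?_⟩
  · -- Lipschitz
    obtain ⟨K, hK⟩ := phi_lipschitz hε hε'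
    exact ⟨3 * K, by rw [hFeq]; exact radial_lipschitz _ K hK hphi0 hphipos⟩
  · -- inverse Lipschitz
    have hG : Function.invFun (Fmap d ε) = radial (psi ε) := by
      funext y
      apply hbij.injective
      rw [Function.invFun_eq ⟨radial (psi ε) y, hright y⟩, hright y]
    obtain ⟨K, hK⟩ := psi_lipschitz hε hε'
    exact ⟨3 * K, by rw [hG]; exact radial_lipschitz _ K hK hpsi0 hpsipos⟩
  · -- image of small ball
    ext y
    simp only [Set.mem_image, mem_ball_zero_iff]
    constructor
    · rintro ⟨x, hx, rfl⟩
      rw [hnormF, phi_inner hε hε' (norm_nonneg x) hx.le]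
      rw [div_lt_one hε]
      exact hx
    · intro hy
      refine ⟨radial (psi ε) y, ?_, hright y⟩
      rw [hnormG, psi_inner hε hε' (norm_nonneg y) hy.le]
      nlinarith [norm_nonneg y]
  · -- image of annulus
    ext y
    simp only [Set.mem_image, Set.mem_diff, mem_ball_zero_iff, not_lt]
    constructor
    · rintro ⟨x, ⟨hx2, hxε⟩, rfl⟩
      rw [hnormF, phi_mid hε hε' hxε hx2.le]
      constructor
      · rw [div_lt_iff₀ hε2]; linarith
      · rw [le_div_iff₀ hε2]; linarith
    · rintro ⟨hy2, hy1⟩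
      refine ⟨radial (psi ε) y, ?_, hright y⟩
      rw [hnormG, psi_mid hε hε' hy1 hy2.le]
      constructor
      · nlinarith
      · nlinarith
  · -- identity outside
    intro x hx
    rw [mem_ball_zero_iff, not_lt] at hx
    rw [Fmap, if_pos hx]
  · -- Jacobian bound
    refine ⟨(1/2 : ℝ) ^ d, by positivity, ?_⟩
    have h1 : volume (sphere (0 : EuclideanSpace ℝ (Fin d)) ε) = 0 :=
      Measure.addHaar_sphere_of_ne_zero volume 0 hε.ne'
    have h2 : volume (sphere (0 : EuclideanSpace ℝ (Fin d)) 2) = 0 :=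
      Measure.addHaar_sphere_of_ne_zero volume 0 two_ne_zero
    have h12 : volume (sphere (0 : EuclideanSpace ℝ (Fin d)) ε
        ∪ sphere (0 : EuclideanSpace ℝ (Fin d)) 2) = 0 := measure_union_null h1 h2
    rw [← MeasureTheory.compl_mem_ae_iff] at h12
    filter_upwards [h12] with x hx
    simp only [Set.mem_compl_iff, Set.mem_union, mem_sphere_zero_iff_norm, not_or] at hx
    obtain ⟨hxε, hx2⟩ := hx
    rcases lt_trichotomy ‖x‖ ε with hlt | heq | hgt
    · -- inner region
      have hU : IsOpen {y : EuclideanSpace ℝ (Fin d) | ‖y‖ < ε} :=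
        isOpen_lt continuous_norm continuous_const
      have hFe : Fmap d ε =ᶠ[nhds x] (fun y => ε⁻¹ • y) := by
        filter_upwards [hU.mem_nhds hlt] with y hy
        rw [Fmap, if_neg (not_le.mpr (by linarith)), if_neg (not_le.mpr hy)]
      have hF' : fderiv ℝ (Fmap d ε) x
          = ε⁻¹ • ContinuousLinearMap.id ℝ (EuclideanSpace ℝ (Fin d)) := by
        rw [hFe.fderiv_eq]
        exact ((hasFDerivAt_id x).const_smul ε⁻¹).fderiv
      have hM : jacMat (Fmap d ε) x = (ε⁻¹ : ℝ) • (1 : Matrix (Fin d) (Fin d) ℝ) := by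
        ext i j
        simp only [jacMat]
        rw [hF']
        simp only [ContinuousLinearMap.smul_apply, ContinuousLinearMap.id_apply,
          Matrix.smul_apply, Matrix.one_apply, PiLp.smul_apply, smul_eq_mul,
          EuclideanSpace.single_apply]
      rw [hM, Matrix.det_smul, Matrix.det_one, mul_one, Fintype.card_fin]
      have hεinv : (1/2 : ℝ) ≤ ε⁻¹ := by
        calc (1/2:ℝ) = 2⁻¹ := by norm_num
        _ ≤ ε⁻¹ := inv_anti₀ hε (by linarith)
      exact pow_le_pow_left₀ (by norm_num) hεinv d
    · exact absurd heq hxε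
    · rcases lt_trichotomy ‖x‖ 2 with hlt2 | heq2 | hgt2
      · -- middle region
        have hx0 : x ≠ 0 := by
          intro h; rw [h, norm_zero] at hgt; linarith
        have hrpos : 0 < ‖x‖ := lt_trans hε hgt
        set r := ‖x‖ with hr
        set a := (2 - 2*ε)/(2-ε) with ha
        set b := (1:ℝ)/(2-ε) with hb
        have hapos : 0 < a := by rw [ha]; exact div_pos (by linarith) hε2
        have hbpos : 0 < b := by rw [hb]; positivity
        have hαpos : 0 < a * r⁻¹ + b := by positivity
        have hU : IsOpen {y : EuclideanSpace ℝ (Fin d) | ε < ‖y‖ ∧ ‖y‖ < 2} :=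
          (isOpen_lt continuous_const continuous_norm).inter
            (isOpen_lt continuous_norm continuous_const)
        have hFe : Fmap d ε =ᶠ[nhds x] (fun y => (a * ‖y‖⁻¹ + b) • y) := by
          filter_upwards [hU.mem_nhds ⟨hgt, hlt2⟩] with y hy
          obtain ⟨hy1, hy2⟩ := hy
          rw [Fmap, if_neg (not_le.mpr hy2), if_pos hy1.le]
          congr 1
        have hm := hasFDerivAt_middle hx0 a b
        have hF' := hFe.fderiv_eq.trans hm.fderiv
        have hM : jacMat (Fmap d ε) x = (a * r⁻¹ + b) • (1 : Matrix (Fin d) (Fin d) ℝ)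
            + (a * -(r^2)⁻¹ * r⁻¹) • Matrix.vecMulVec (x : Fin d → ℝ) x := by
          ext i j
          simp only [jacMat]
          rw [hF']
          simp only [ContinuousLinearMap.add_apply, ContinuousLinearMap.smul_apply,
            ContinuousLinearMap.id_apply, ContinuousLinearMap.smulRight_apply,
            innerSL_apply_apply, PiLp.add_apply, PiLp.smul_apply, smul_eq_mul,
            EuclideanSpace.single_apply, Matrix.add_apply, Matrix.smul_apply,
            Matrix.one_apply, Matrix.vecMulVec_apply]
          rw [EuclideanSpace.inner_single_right]
          simp only [map_one, one_mul, conj_trivial]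
          by_cases hij : i = j <;> simp [hij] <;> ring
        have hsum : ∑ i, (x : Fin d → ℝ) i * x i = r ^ 2 := by
          rw [hr, ← real_inner_self_eq_norm_sq]
          simp only [PiLp.inner_apply, RCLike.inner_apply, conj_trivial]
        rw [hM, det_smul_one_add_smul_vecMulVec _ _ hαpos.ne' _, Fintype.card_fin, hsum]
        have hr0 : r ≠ 0 := hrpos.ne'
        have hkey : (a * r⁻¹ + b) ^ d * (1 + (a * -(r^2)⁻¹ * r⁻¹) / (a * r⁻¹ + b) * r ^ 2)
            = (a * r⁻¹ + b) ^ (d-1) * b := by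
          obtain ⟨k, hk⟩ : ∃ k, d = k + 1 := ⟨d - 1, by omega⟩
          rw [hk]
          simp only [Nat.add_sub_cancel]
          rw [pow_succ, mul_assoc]
          congr 1
          field_simp
          ring
        rw [hkey]
        have hb2 : (1/2:ℝ) ≤ b := by
          rw [hb]
          exact one_div_le_one_div_of_le hε2 (by linarith)
        have hα2 : (1/2:ℝ) ≤ a * r⁻¹ + b :=
          le_trans hb2 (le_add_of_nonneg_left (by positivity))
        calc (1/2:ℝ)^d = (1/2)^(d-1) * (1/2) := by
              rw [← pow_succ]; congr 1; omega
        _ ≤ (a * r⁻¹ + b)^(d-1) * b :=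
              mul_le_mul (pow_le_pow_left₀ (by norm_num) hα2 _) hb2 (by norm_num) (by positivity)
      · exact absurd heq2 hx2
      · -- outer region
        have hU : IsOpen {y : EuclideanSpace ℝ (Fin d) | 2 < ‖y‖} :=
          isOpen_lt continuous_const continuous_norm
        have hFe : Fmap d ε =ᶠ[nhds x] id := by
          filter_upwards [hU.mem_nhds hgt2] with y hy
          rw [Fmap, if_pos hy.le]
          rfl
        have hF' : fderiv ℝ (Fmap d ε) x
            = ContinuousLinearMap.id ℝ (EuclideanSpace ℝ (Fin d)) := by
          rw [hFe.fderiv_eq]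
          exact fderiv_id
        have hM : jacMat (Fmap d ε) x = (1 : Matrix (Fin d) (Fin d) ℝ) := by
          ext i j
          simp only [jacMat]
          rw [hF']
          simp [ContinuousLinearMap.id_apply, Matrix.one_apply, EuclideanSpace.single_apply]
        rw [hM, Matrix.det_one]
        exact pow_le_one₀ (by norm_num) (by norm_num)

end
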